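/- Let q be a state of an I-unfolding G = (Q, A, T) of a Petri net A, let m := ‖A‖∞, r := |Q|, b := (3dm)^{(d+2)^{2d+1}}, and s := max{‖q‖∞, d·b^d·m + m·r³·(3drm)^d}. Then every minimal element of the upward-closed set U_{q,G} has infinity norm at most s. -/
import Mathlib


open scoped BigOperators

/-- A configuration is a vector in `ℕ^d`. -/
abbrev Cfg (d : ℕ) := Fin d → ℕ

/-- A Petri net action is a pair of configurations. -/
abbrev PNAction (d : ℕ) := Cfg d × Cfg d

/-- Displacement of an action. -/
def disp {d : ℕ} (a : PNAction d) : Fin d → ℤ :=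
  fun i => (a.2 i : ℤ) - (a.1 i : ℤ)

/-- Infinity norm of an action. -/
def anorm {d : ℕ} (a : PNAction d) : ℕ :=
  Finset.univ.sup fun i => max (a.1 i) (a.2 i)

/-- Infinity norm of a Petri net. -/
def netNorm {d : ℕ} (A : Finset (PNAction d)) : ℕ := A.sup anorm

/-- Step relation of a single action. -/
def Step {d : ℕ} (a : PNAction d) (x y : Cfg d) : Prop :=
  ∃ c : Cfg d, x = a.1 + c ∧ y = a.2 + c

/-- Step relation of a word of actions. -/
def Fires {d : ℕ} : List (PNAction d) → Cfg d → Cfg d → Prop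
  | [], x, y => x = y
  | a :: σ, x, y => ∃ z, Step a x z ∧ Fires σ z y

/-- Displacement of a word of actions. -/
def wdisp {d : ℕ} (σ : List (PNAction d)) : Fin d → ℤ :=
  (σ.map disp).sum

/-- Reachability relation of a Petri net. -/
def Reach {d : ℕ} (A : Finset (PNAction d)) (x y : Cfg d) : Prop :=
  ∃ σ : List (PNAction d), (∀ a ∈ σ, a ∈ A) ∧ Fires σ x y

/-- Mutual reachability. -/
def MutualReach {d : ℕ} (A : Finset (PNAction d)) (x y : Cfg d) : Prop :=
  Reach A x y ∧ Reach A y x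

/-- A strongly connected component of configurations: an equivalence class of mutual
reachability. -/
def IsSCCC {d : ℕ} (A : Finset (PNAction d)) (C : Set (Cfg d)) : Prop :=
  ∃ c₀ : Cfg d, C = {x | MutualReach A c₀ x}

/-- An `I`-configuration. -/
abbrev ICfg (d : ℕ) (I : Finset (Fin d)) := {i : Fin d // i ∈ I} → ℕ

/-- Restriction of a configuration to the components in `I`. -/
def restrictC {d : ℕ} (I : Finset (Fin d)) (c : Cfg d) : ICfg d I := fun i => c i.1

/-- Step relation of an action on `I`-configurations. -/
def IStep {d : ℕ} {I : Finset (Fin d)} (a : PNAction d) (p q : ICfg d I) : Prop :=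
  ∃ c : ICfg d I, p = restrictC I a.1 + c ∧ q = restrictC I a.2 + c

/-- A transition of an `I`-unfolding. -/
abbrev UTrans (d : ℕ) (I : Finset (Fin d)) := ICfg d I × PNAction d × ICfg d I

/-- Path from `p` to `q` in a transition set. -/
def IsPath {d : ℕ} {I : Finset (Fin d)} (T : Finset (UTrans d I)) :
    List (UTrans d I) → ICfg d I → ICfg d I → Prop
  | [], p, q => p = q
  | t :: π, p, q => t ∈ T ∧ t.1 = p ∧ IsPath T π t.2.2 q

/-- Label of a path. -/
def plabel {d : ℕ} {I : Finset (Fin d)} (π : List (UTrans d I)) : List (PNAction d) :=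
  π.map fun t => t.2.1

/-- Displacement of a path. -/
def pdisp {d : ℕ} {I : Finset (Fin d)} (π : List (UTrans d I)) : Fin d → ℤ :=
  wdisp (plabel π)

/-- An `I`-unfolding of a Petri net `A`. -/
structure Unfolding (d : ℕ) (I : Finset (Fin d)) (A : Finset (PNAction d)) where
  Q : Finset (ICfg d I)
  T : Finset (UTrans d I)
  Q_nonempty : Q.Nonempty
  T_mem : ∀ t ∈ T, t.1 ∈ Q ∧ t.2.1 ∈ A ∧ t.2.2 ∈ Q
  T_step : ∀ t ∈ T, IStep t.2.1 t.1 t.2.2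
  connected : ∀ p ∈ Q, ∀ q ∈ Q, ∃ π, IsPath T π p q

/-- Structural reversibility. -/
def StructRev {d : ℕ} {I : Finset (Fin d)} {A : Finset (PNAction d)}
    (G : Unfolding d I A) : Prop :=
  ∀ t ∈ G.T, ∃ π, IsPath G.T π t.2.2 t.1 ∧ wdisp (plabel (t :: π)) = 0

/-- Simple cycle on a state `q`. -/
def SimpleCycle {d : ℕ} {I : Finset (Fin d)} (T : Finset (UTrans d I))
    (π : List (UTrans d I)) (q : ICfg d I) : Prop :=
  IsPath T π q q ∧ π ≠ [] ∧ (π.map fun t => t.2.2).Nodup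

/-- The lattice spanned by the displacements of the simple cycles of `G`. -/
def LG {d : ℕ} {I : Finset (Fin d)} {A : Finset (PNAction d)}
    (G : Unfolding d I A) : AddSubgroup (Fin d → ℤ) :=
  AddSubgroup.closure {v | ∃ q ∈ G.Q, ∃ π, SimpleCycle G.T π q ∧ pdisp π = v}

/-- The coset `Δ(π) + L_G` for paths `π` from `p` to `q`. -/
def LpGq {d : ℕ} {I : Finset (Fin d)} {A : Finset (PNAction d)}
    (G : Unfolding d I A) (p q : ICfg d I) : Set (Fin d → ℤ) :=
  {v | ∃ π, IsPath G.T π p q ∧ v - pdisp π ∈ LG G}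

/-- The bound `b := (3dm)^((d+2)^(2d+1))`. -/
def bVal (d m : ℕ) : ℕ := (3 * d * m) ^ ((d + 2) ^ (2 * d + 1))

/-- The threshold `m·r³·(3drm)^d`. -/
def thrVal (d m r : ℕ) : ℕ := m * r ^ 3 * (3 * d * r * m) ^ d

/-- A pumping pair for `(q, G)`: a pair of words labeling cycles on `q` of length at
most `d·b^d`. -/
def PumpingPair {d : ℕ} {I : Finset (Fin d)} {A : Finset (PNAction d)}
    (G : Unfolding d I A) (q : ICfg d I) (u v : List (PNAction d)) : Prop :=
  (∃ α, IsPath G.T α q q ∧ plabel α = u ∧ α.length ≤ d * (bVal d (netNorm A)) ^ d) ∧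
  (∃ β, IsPath G.T β q q ∧ plabel β = v ∧ β.length ≤ d * (bVal d (netNorm A)) ^ d)

/-- The upward-closed set `U_{q,G}`. -/
def UqG {d : ℕ} {I : Finset (Fin d)} {A : Finset (PNAction d)}
    (G : Unfolding d I A) (q : ICfg d I) : Set (Cfg d) :=
  {c | q ≤ restrictC I c ∧ ∃ u v, PumpingPair G q u v ∧
    ∃ cm cp : Cfg d, Fires u cm c ∧ Fires v c cp ∧
      ∀ i : Fin d, i ∉ I →
        thrVal d (netNorm A) G.Q.card ≤ cm i ∧ thrVal d (netNorm A) G.Q.card ≤ cp i}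

section Aux

variable {d : ℕ}

/-- Decrement coordinate `i` by one. -/
def decAt (i : Fin d) (x : Cfg d) : Cfg d := Function.update x i (x i - 1)

lemma decAt_apply (i : Fin d) (x : Cfg d) (j : Fin d) :
    decAt i x j = if j = i then x i - 1 else x j := by
  simp [decAt, Function.update]

lemma anorm_coord {a : PNAction d} {m : ℕ} (ha : anorm a ≤ m) (i : Fin d) :
    a.1 i ≤ m ∧ a.2 i ≤ m := by
  have : max (a.1 i) (a.2 i) ≤ anorm a :=
    Finset.le_sup (f := fun i => max (a.1 i) (a.2 i)) (Finset.mem_univ i)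
  constructor <;> omega

lemma step_coord_bound {a : PNAction d} {x y : Cfg d} {m : ℕ} (ha : anorm a ≤ m)
    (h : Step a x y) (i : Fin d) : y i ≤ x i + m ∧ x i ≤ y i + m := by
  obtain ⟨c, hx, hy⟩ := h
  obtain ⟨h1, h2⟩ := anorm_coord ha i
  subst hx hy
  simp only [Pi.add_apply]
  omega

lemma fires_coord_bound {m : ℕ} :
    ∀ {σ : List (PNAction d)} {x y : Cfg d}, (∀ a ∈ σ, anorm a ≤ m) →
      Fires σ x y → ∀ i, y i ≤ x i + σ.length * m ∧ x i ≤ y i + σ.length * m := by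
  intro σ
  induction σ with
  | nil => intro x y _ h i; cases h; simp
  | cons a σ ih =>
    intro x y hm h i
    obtain ⟨z, hs, hf⟩ := h
    have h1 := step_coord_bound (hm a (by simp)) hs i
    have h2 := ih (fun a ha => hm a (by simp [ha])) hf i
    simp only [List.length_cons, add_one_mul]
    omega

lemma step_decAt {a : PNAction d} {x y : Cfg d} {i : Fin d}
    (h : Step a x y) (hx : a.1 i + 1 ≤ x i) (hy : a.2 i + 1 ≤ y i) :
    Step a (decAt i x) (decAt i y) := by
  obtain ⟨c, rfl, rfl⟩ := h
  simp only [Pi.add_apply] at hx hy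
  refine ⟨decAt i c, ?_, ?_⟩ <;>
  · funext j
    rcases eq_or_ne j i with rfl | hj
    · simp only [Pi.add_apply, decAt_apply, if_pos rfl, if_true]
      omega
    · simp [decAt_apply, hj]

lemma fires_decAt_end {m : ℕ} {i : Fin d} :
    ∀ {σ : List (PNAction d)} {x y : Cfg d}, (∀ a ∈ σ, anorm a ≤ m) →
      Fires σ x y → σ.length * m + 1 ≤ y i →
      Fires σ (decAt i x) (decAt i y) := by
  intro σ
  induction σ with
  | nil => intro x y _ h _; cases h; rfl
  | cons a σ ih =>
    intro x y hm h hb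
    obtain ⟨z, hs, hf⟩ := h
    have ham : anorm a ≤ m := hm a (by simp)
    obtain ⟨ha1, ha2⟩ := anorm_coord ham i
    have hzb := (fires_coord_bound (fun a ha => hm a (by simp [ha])) hf i).1
    simp only [List.length_cons, add_one_mul] at hb
    obtain ⟨cc, hx', hz'⟩ := hs
    have hxi : x i = a.1 i + cc i := by rw [hx']; simp
    have hzi : z i = a.2 i + cc i := by rw [hz']; simp
    refine ⟨decAt i z, step_decAt ⟨cc, hx', hz'⟩ (by omega) (by omega),
      ih (fun a ha => hm a (by simp [ha])) hf (by omega)⟩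

lemma fires_decAt_start {m : ℕ} {i : Fin d} :
    ∀ {σ : List (PNAction d)} {x y : Cfg d}, (∀ a ∈ σ, anorm a ≤ m) →
      Fires σ x y → σ.length * m + 1 ≤ x i →
      Fires σ (decAt i x) (decAt i y) := by
  intro σ
  induction σ with
  | nil => intro x y _ h _; cases h; rfl
  | cons a σ ih =>
    intro x y hm h hb
    obtain ⟨z, hs, hf⟩ := h
    have ham : anorm a ≤ m := hm a (by simp)
    obtain ⟨ha1, ha2⟩ := anorm_coord ham i
    simp only [List.length_cons, add_one_mul] at hb
    obtain ⟨cc, hx', hz'⟩ := hs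
    have hxi : x i = a.1 i + cc i := by rw [hx']; simp
    have hzi : z i = a.2 i + cc i := by rw [hz']; simp
    refine ⟨decAt i z, step_decAt ⟨cc, hx', hz'⟩ (by omega) (by omega),
      ih (fun a ha => hm a (by simp [ha])) hf (by omega)⟩

lemma path_label_norm {I : Finset (Fin d)} {A : Finset (PNAction d)}
    (G : Unfolding d I A) :
    ∀ {π : List (UTrans d I)} {p q' : ICfg d I}, IsPath G.T π p q' →
      ∀ a ∈ plabel π, anorm a ≤ netNorm A := by
  intro π
  induction π with
  | nil => intro p q' _ a ha; simp [plabel] at ha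
  | cons t π ih =>
    intro p q' h a ha
    obtain ⟨hT, _, hpath⟩ := h
    simp only [plabel, List.map_cons, List.mem_cons] at ha
    rcases ha with rfl | ha
    · exact Finset.le_sup (G.T_mem t hT).2.1
    · exact ih hpath a ha

end Aux

/-- Every minimal element of `U_{q,G}` has infinity norm bounded by
`s := max{‖q‖∞, d·b^d·m + m·r³·(3drm)^d}` where `m := ‖A‖∞`, `r := |Q|` and
`b := (3dm)^((d+2)^(2d+1))`. -/
theorem UqG_minimal_elements_bound {d : ℕ} {I : Finset (Fin d)}
    {A : Finset (PNAction d)} (G : Unfolding d I A) (q : ICfg d I) (hq : q ∈ G.Q)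
    (c : Cfg d) (hc : c ∈ UqG G q)
    (hmin : ∀ x ∈ UqG G q, x ≤ c → x = c) :
    ∀ i : Fin d,
      c i ≤ max (Finset.univ.sup q)
        (d * (bVal d (netNorm A)) ^ d * netNorm A +
          thrVal d (netNorm A) G.Q.card) := by
  intro i
  by_contra hcon
  push_neg at hcon
  obtain ⟨hqle, u, v, ⟨⟨alpha, hαp, hαl, hαlen⟩, ⟨beta, hβp, hβl, hβlen⟩⟩,
    cm, cp, hfu, hfv, hth⟩ := hc
  have hSup : Finset.univ.sup q < c i := (le_max_left _ _).trans_lt hcon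
  have hBig : d * (bVal d (netNorm A)) ^ d * netNorm A +
      thrVal d (netNorm A) G.Q.card < c i := (le_max_right _ _).trans_lt hcon
  have hum : ∀ a ∈ u, anorm a ≤ netNorm A := hαl ▸ path_label_norm G hαp
  have hvm : ∀ a ∈ v, anorm a ≤ netNorm A := hβl ▸ path_label_norm G hβp
  have hulen : u.length ≤ d * (bVal d (netNorm A)) ^ d := by
    rw [← hαl]; simpa [plabel] using hαlen
  have hvlen : v.length ≤ d * (bVal d (netNorm A)) ^ d := by
    rw [← hβl]; simpa [plabel] using hβlen
  have hukey : u.length * netNorm A + thrVal d (netNorm A) G.Q.card < c i :=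
    lt_of_le_of_lt (Nat.add_le_add_right (Nat.mul_le_mul hulen le_rfl) _) hBig
  have hvkey : v.length * netNorm A + thrVal d (netNorm A) G.Q.card < c i :=
    lt_of_le_of_lt (Nat.add_le_add_right (Nat.mul_le_mul hvlen le_rfl) _) hBig
  have hcmb : c i ≤ cm i + u.length * netNorm A := (fires_coord_bound hum hfu i).1
  have hcpb : c i ≤ cp i + v.length * netNorm A := (fires_coord_bound hvm hfv i).2
  have hfu' : Fires u (decAt i cm) (decAt i c) := fires_decAt_end hum hfu (by omega)
  have hfv' : Fires v (decAt i c) (decAt i cp) :=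
    fires_decAt_start hvm hfv (by omega)
  have hxmem : decAt i c ∈ UqG G q := by
    refine ⟨?_, u, v, ⟨⟨alpha, hαp, hαl, hαlen⟩, ⟨beta, hβp, hβl, hβlen⟩⟩,
      decAt i cm, decAt i cp, hfu', hfv', ?_⟩
    · intro j
      have hqj : q j ≤ Finset.univ.sup q := Finset.le_sup (Finset.mem_univ j)
      show q j ≤ decAt i c j.1
      rw [decAt_apply]
      by_cases hj : (j : Fin d) = i
      · rw [if_pos hj]
        omega
      · rw [if_neg hj]
        exact hqle j
    · intro j hj
      obtain ⟨h1, h2⟩ := hth j hj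
      refine ⟨?_, ?_⟩
      · rw [decAt_apply]
        by_cases hji : j = i
        · rw [if_pos hji]; subst hji; omega
        · rw [if_neg hji]; exact h1
      · rw [decAt_apply]
        by_cases hji : j = i
        · rw [if_pos hji]; subst hji; omega
        · rw [if_neg hji]; exact h2
  have hxle : decAt i c ≤ c := by
    intro j
    rw [decAt_apply]
    by_cases hj : j = i
    · rw [if_pos hj]; exact Nat.sub_le _ _ |>.trans (hj ▸ le_rfl)
    · rw [if_neg hj]
  have := congrFun (hmin _ hxmem hxle) i
  rw [decAt_apply, if_pos rfl] at this
  omega
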